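/- Let S ⊂ R^n be a porous set (with porosity constant κ ∈ (0,1]), and 1 ≤ p < ∞. Then for every x ∈ S and 0 < r ≤ 1: ∫_{B(x,r)} |log(1/dist(y,S))|^p dy ≤ c r^n (1 + |log(1/r)|^p), where c depends only on n, p, κ. -/

import Mathlib

open MeasureTheory Metric

section PorousAux

variable {n : ℕ} {κ : ℝ} {S : Set (EuclideanSpace ℝ (Fin n))}

lemma porous_hole (hκ0 : 0 < κ) (hκ1 : κ ≤ 1) (hS : S.Nonempty)
    (hpor : ∀ x : EuclideanSpace ℝ (Fin n), ∀ r : ℝ, 0 < r → r ≤ 1 →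
      ∃ y ∈ ball x r, ball y (κ * r) ∩ S = ∅)
    (z : EuclideanSpace ℝ (Fin n)) {ρ : ℝ} (hρ : 0 < ρ) (hρ1 : ρ ≤ 1) :
    ∃ y, ball y (κ * ρ / 4) ⊆ ball z ρ ∧
      ∀ w ∈ ball y (κ * ρ / 4), κ * ρ / 4 ≤ infDist w S := by
  obtain ⟨y, hy, hball⟩ := hpor z (ρ / 2) (by linarith) (by linarith)
  rw [mem_ball] at hy
  have hyS : κ * ρ / 2 ≤ infDist y S := by
    by_contra h
    push_neg at h
    have h2 : κ * (ρ / 2) = κ * ρ / 2 := by ring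
    obtain ⟨s, hsS, hsd⟩ := (infDist_lt_iff (x := y) (r := κ * ρ / 2) hS).1 h
    have : s ∈ ball y (κ * (ρ / 2)) ∩ S := ⟨by rw [mem_ball, h2, dist_comm]; exact hsd, hsS⟩
    simp [hball] at this
  refine ⟨y, fun w hw => ?_, fun w hw => ?_⟩ <;> rw [mem_ball] at hw
  · rw [mem_ball]
    calc dist w z ≤ dist w y + dist y z := dist_triangle _ _ _
    _ < κ * ρ / 4 + ρ / 2 := by linarith
    _ ≤ ρ := by nlinarith
  · have h1 : infDist y S ≤ infDist w S + dist y w := infDist_le_infDist_add_dist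
    rw [dist_comm] at h1
    linarith

lemma porous_step (hκ0 : 0 < κ) (hκ1 : κ ≤ 1) (hS : S.Nonempty)
    (hpor : ∀ x : EuclideanSpace ℝ (Fin n), ∀ r : ℝ, 0 < r → r ≤ 1 →
      ∃ y ∈ ball x r, ball y (κ * r) ∩ S = ∅)
    (x : EuclideanSpace ℝ (Fin n)) {R β t : ℝ} (hβ0 : 0 < β) (hβ1 : β ≤ 1)
    (ht : t ≤ κ * β / 4) :
    volume ({y | infDist y S < t} ∩ ball x R)
      ≤ ENNReal.ofReal (1 / (1 + (κ / 20) ^ n)) *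
        volume ({y | infDist y S < t + β} ∩ ball x (R + β)) := by
  classical
  set μ : Measure (EuclideanSpace ℝ (Fin n)) := volume with hμ
  set A : Set (EuclideanSpace ℝ (Fin n)) := {y | infDist y S < t} ∩ ball x R with hA
  set B : Set (EuclideanSpace ℝ (Fin n)) := {y | infDist y S < t + β} ∩ ball x (R + β) with hB
  -- Vitali
  obtain ⟨u, huA, hdisj, hcov⟩ := Vitali.exists_disjoint_subfamily_covering_enlargement_closedBall
    A (id : EuclideanSpace ℝ (Fin n) → EuclideanSpace ℝ (Fin n)) (fun _ => β) β (fun _ _ => le_rfl) 5 (by norm_num)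
  simp only [id] at hdisj hcov
  -- countability of u
  have hucnt : u.Countable := by
    have hpos : ∀ i : u, 0 < μ (closedBall (i : EuclideanSpace ℝ (Fin n)) β) :=
      fun i => measure_closedBall_pos μ _ (by linarith)
    have hd : Pairwise (Function.onFun Disjoint fun i : u => closedBall (i : EuclideanSpace ℝ (Fin n)) β) := by
      intro i j hij
      exact hdisj i.2 j.2 (fun h => hij (Subtype.ext h))
    have := MeasureTheory.Measure.countable_meas_pos_of_disjoint_iUnion
      (μ := μ) (As := fun i : u => closedBall (i : EuclideanSpace ℝ (Fin n)) β)
      (fun i => measurableSet_closedBall) hd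
    have huniv : {i : u | 0 < μ (closedBall (i : EuclideanSpace ℝ (Fin n)) β)} = Set.univ :=
      Set.eq_univ_of_forall (fun i => hpos i)
    rw [huniv, Set.countable_univ_iff] at this
    exact (Set.countable_coe_iff).1 this
  -- cover of A by enlarged balls
  have hAcov : A ⊆ ⋃ b ∈ u, closedBall b (5 * β) := by
    intro a ha
    obtain ⟨b, hb, hsub⟩ := hcov a ha
    exact Set.mem_biUnion hb (hsub (mem_closedBall_self (by linarith)))
  -- holes
  have hol : ∀ z : EuclideanSpace ℝ (Fin n), ∃ y, ball y (κ * β / 4) ⊆ ball z β ∧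
      ∀ w ∈ ball y (κ * β / 4), κ * β / 4 ≤ infDist w S :=
    fun z => porous_hole hκ0 hκ1 hS hpor z hβ0 hβ1
  choose g hg1 hg2 using hol
  set G : EuclideanSpace ℝ (Fin n) → Set (EuclideanSpace ℝ (Fin n)) := fun b => ball (g b) (κ * β / 4) with hG
  have hκβ : 0 < κ * β / 4 := by positivity
  -- G b disjoint from A-part
  have hGA : ∀ b, Disjoint (G b) {y : EuclideanSpace ℝ (Fin n) | infDist y S < t} := by
    intro b
    rw [Set.disjoint_left]
    intro w hw hw2
    exact absurd (lt_of_lt_of_le (Set.mem_setOf.1 hw2) ht) (not_lt.2 (hg2 b w hw))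
  have hGsub : ∀ b, G b ⊆ closedBall b β :=
    fun b => (hg1 b).trans ball_subset_closedBall
  have hGdisj : u.PairwiseDisjoint G := hdisj.mono_on (fun b _ => hGsub b)
  -- A ∪ ⋃ G ⊆ B
  have hsubB : A ∪ ⋃ b ∈ u, G b ⊆ B := by
    apply Set.union_subset
    · rintro y ⟨hy1, hy2⟩
      exact ⟨by simp only [Set.mem_setOf_eq] at hy1 ⊢; linarith,
        mem_ball.2 (lt_of_lt_of_le (mem_ball.1 hy2) (by linarith))⟩
    · intro w hw
      obtain ⟨b, hb, hwb⟩ := Set.mem_iUnion₂.1 hw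
      have hwb' : dist w b < β := mem_ball.1 ((hg1 b) hwb)
      obtain ⟨hb1, hb2⟩ := huA hb
      constructor
      · simp only [Set.mem_setOf_eq] at hb1 ⊢
        have := infDist_le_infDist_add_dist (x := w) (y := b) (s := S)
        linarith
      · rw [mem_ball] at hb2 ⊢
        calc dist w x ≤ dist w b + dist b x := dist_triangle _ _ _
        _ < β + R := by linarith
        _ = R + β := by ring
  -- measure computation
  have hVfin : μ (ball (0 : EuclideanSpace ℝ (Fin n)) 1) ≠ ⊤ := measure_ball_lt_top.ne
  have hGm : μ (⋃ b ∈ u, G b) = ∑' (b : u), μ (G (b : EuclideanSpace ℝ (Fin n))) :=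
    measure_biUnion hucnt hGdisj (fun b _ => measurableSet_ball)
  have hGval : ∀ b : EuclideanSpace ℝ (Fin n), μ (G b) = ENNReal.ofReal ((κ * β / 4) ^ n) * μ (ball 0 1) := by
    intro b
    rw [hG]
    rw [Measure.addHaar_ball_of_pos μ _ hκβ, finrank_euclideanSpace_fin]
  have hCBval : ∀ b : EuclideanSpace ℝ (Fin n), μ (closedBall b (5 * β)) =
      ENNReal.ofReal ((5 * β) ^ n) * μ (ball 0 1) := by
    intro b
    rw [Measure.addHaar_closedBall μ _ (by linarith), finrank_euclideanSpace_fin]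
  have hratio : ENNReal.ofReal ((κ / 20) ^ n) * (ENNReal.ofReal ((5 * β) ^ n) * μ (ball 0 1))
      = ENNReal.ofReal ((κ * β / 4) ^ n) * μ (ball 0 1) := by
    rw [← mul_assoc, ← ENNReal.ofReal_mul (by positivity), ← mul_pow]
    norm_num
    ring_nf
  -- c₀ * μ A ≤ μ (⋃ G)
  have hstep1 : ENNReal.ofReal ((κ / 20) ^ n) * μ A ≤ μ (⋃ b ∈ u, G b) := by
    calc ENNReal.ofReal ((κ / 20) ^ n) * μ A
        ≤ ENNReal.ofReal ((κ / 20) ^ n) * ∑' (b : u), μ (closedBall (b : EuclideanSpace ℝ (Fin n)) (5 * β)) := by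
          gcongr
          exact (measure_mono hAcov).trans (measure_biUnion_le μ hucnt _)
      _ = ∑' (b : u), ENNReal.ofReal ((κ / 20) ^ n) * μ (closedBall (b : EuclideanSpace ℝ (Fin n)) (5 * β)) :=
          (ENNReal.tsum_mul_left).symm
      _ = ∑' (b : u), μ (G (b : EuclideanSpace ℝ (Fin n))) := by
          congr 1
          ext b
          rw [hCBval, hratio, hGval]
      _ = μ (⋃ b ∈ u, G b) := hGm.symm
  -- disjointness of A and ⋃ G
  have hAG : Disjoint A (⋃ b ∈ u, G b) := by
    rw [Set.disjoint_right]
    intro w hw hwA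
    obtain ⟨b, hb, hwb⟩ := Set.mem_iUnion₂.1 hw
    exact absurd (lt_of_lt_of_le hwA.1 ht) (not_lt.2 (hg2 b w hwb))
  have hAmeas : MeasurableSet (⋃ b ∈ u, G b) :=
    MeasurableSet.biUnion hucnt (fun b _ => measurableSet_ball)
  have hsum : μ A + ENNReal.ofReal ((κ / 20) ^ n) * μ A ≤ μ B := by
    calc μ A + ENNReal.ofReal ((κ / 20) ^ n) * μ A
        ≤ μ A + μ (⋃ b ∈ u, G b) := by gcongr
      _ = μ (A ∪ ⋃ b ∈ u, G b) := (measure_union hAG hAmeas).symm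
      _ ≤ μ B := measure_mono hsubB
  -- conclude
  have hc0 : (0:ℝ) < (κ / 20) ^ n := by positivity
  have key : ENNReal.ofReal (1 + (κ / 20) ^ n) * μ A ≤ μ B := by
    rw [ENNReal.ofReal_add zero_le_one hc0.le, ENNReal.ofReal_one, add_mul, one_mul]
    exact hsum
  calc μ A = ENNReal.ofReal (1 / (1 + (κ / 20) ^ n)) *
        (ENNReal.ofReal (1 + (κ / 20) ^ n) * μ A) := by
        rw [← mul_assoc, ← ENNReal.ofReal_mul (by positivity)]
        rw [one_div, inv_mul_cancel₀ (by positivity), ENNReal.ofReal_one, one_mul]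
    _ ≤ ENNReal.ofReal (1 / (1 + (κ / 20) ^ n)) * μ B := by gcongr

lemma porous_decay (hκ0 : 0 < κ) (hκ1 : κ ≤ 1) (hS : S.Nonempty)
    (hpor : ∀ x : EuclideanSpace ℝ (Fin n), ∀ r : ℝ, 0 < r → r ≤ 1 →
      ∃ y ∈ ball x r, ball y (κ * r) ∩ S = ∅)
    (x : EuclideanSpace ℝ (Fin n)) {r : ℝ} (hr0 : 0 < r) (hr1 : r ≤ 1) (k : ℕ) :
    volume ({y | infDist y S < (κ / 8) ^ k * r} ∩ ball x (r * (2 + (κ / 8) ^ k)))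
      ≤ ENNReal.ofReal (1 / (1 + (κ / 20) ^ n)) ^ k * volume (ball x (3 * r)) := by
  have hlam0 : (0:ℝ) < κ / 8 := by linarith
  have hlam1 : κ / 8 ≤ 1 / 8 := by linarith
  induction k with
  | zero =>
    simp only [pow_zero, one_mul]
    have : r * (2 + 1) = 3 * r := by ring
    rw [this]
    exact measure_mono (Set.inter_subset_right)
  | succ k ih =>
    have hpk : (0:ℝ) < (κ / 8) ^ k := pow_pos hlam0 k
    have hpk1 : (κ / 8) ^ k ≤ 1 := pow_le_one₀ hlam0.le (by linarith)
    have hβ0 : (0:ℝ) < (κ / 8) ^ k * r / 2 := by positivity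
    have hβ1 : (κ / 8) ^ k * r / 2 ≤ 1 := by nlinarith
    have ht : (κ / 8) ^ (k + 1) * r ≤ κ * ((κ / 8) ^ k * r / 2) / 4 := by
      rw [pow_succ]
      nlinarith
    calc volume ({y | infDist y S < (κ / 8) ^ (k+1) * r}
          ∩ ball x (r * (2 + (κ / 8) ^ (k+1))))
        ≤ ENNReal.ofReal (1 / (1 + (κ / 20) ^ n)) *
          volume ({y | infDist y S < (κ / 8) ^ (k+1) * r + (κ / 8) ^ k * r / 2}
            ∩ ball x (r * (2 + (κ / 8) ^ (k+1)) + (κ / 8) ^ k * r / 2)) :=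
        porous_step hκ0 hκ1 hS hpor x hβ0 hβ1 ht
      _ ≤ ENNReal.ofReal (1 / (1 + (κ / 20) ^ n)) *
          volume ({y | infDist y S < (κ / 8) ^ k * r} ∩ ball x (r * (2 + (κ / 8) ^ k))) := by
          gcongr
          · rw [pow_succ]
            nlinarith
          · rw [pow_succ]
            nlinarith
      _ ≤ ENNReal.ofReal (1 / (1 + (κ / 20) ^ n)) *
          (ENNReal.ofReal (1 / (1 + (κ / 20) ^ n)) ^ k * volume (ball x (3 * r))) := by
          gcongr
      _ = ENNReal.ofReal (1 / (1 + (κ / 20) ^ n)) ^ (k+1) * volume (ball x (3 * r)) := by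
          rw [pow_succ]
          ring

end PorousAux

lemma rpow_poly_bound {p : ℝ} (hp : 1 ≤ p) {M L : ℝ} (hM : 0 ≤ M) (hL : 0 ≤ L) (k : ℕ) :
    (((k:ℝ) + 1) * M + L) ^ p ≤
      ((k:ℝ) + 1) ^ (⌈p⌉₊) * (2 ^ p * max 1 (M ^ p) * (1 + L ^ p)) := by
  have hp0 : 0 ≤ p := by linarith
  set a : ℝ := (k:ℝ) + 1 with ha
  have ha1 : (1:ℝ) ≤ a := by rw [ha]; have := Nat.cast_nonneg (α := ℝ) k; linarith
  have h1 : a * M + L ≤ a * (M + L) := by nlinarith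
  have h2 : (a * M + L) ^ p ≤ (a * (M + L)) ^ p :=
    Real.rpow_le_rpow (by positivity) h1 hp0
  have h3 : (a * (M + L)) ^ p = a ^ p * (M + L) ^ p :=
    Real.mul_rpow (by positivity) (by positivity)
  have h4 : a ^ p ≤ a ^ (⌈p⌉₊ : ℕ) := by
    rw [← Real.rpow_natCast a ⌈p⌉₊]
    exact Real.rpow_le_rpow_of_exponent_le ha1 (Nat.le_ceil p)
  have h5 : (M + L) ^ p ≤ 2 ^ p * (M ^ p + L ^ p) := by
    rcases le_total M L with h | h
    · calc (M + L) ^ p ≤ (2 * L) ^ p :=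
            Real.rpow_le_rpow (by positivity) (by linarith) hp0
        _ = 2 ^ p * L ^ p := Real.mul_rpow (by norm_num) hL
        _ ≤ 2 ^ p * (M ^ p + L ^ p) := by
            have : 0 ≤ M ^ p := Real.rpow_nonneg hM p
            have h2p : (0:ℝ) ≤ 2 ^ p := Real.rpow_nonneg (by norm_num) p
            nlinarith
    · calc (M + L) ^ p ≤ (2 * M) ^ p :=
            Real.rpow_le_rpow (by positivity) (by linarith) hp0
        _ = 2 ^ p * M ^ p := Real.mul_rpow (by norm_num) hM
        _ ≤ 2 ^ p * (M ^ p + L ^ p) := by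
            have : 0 ≤ L ^ p := Real.rpow_nonneg hL p
            have h2p : (0:ℝ) ≤ 2 ^ p := Real.rpow_nonneg (by norm_num) p
            nlinarith
  have h6 : M ^ p + L ^ p ≤ max 1 (M ^ p) * (1 + L ^ p) := by
    have hm1 : (1:ℝ) ≤ max 1 (M ^ p) := le_max_left _ _
    have hm2 : M ^ p ≤ max 1 (M ^ p) := le_max_right _ _
    have : 0 ≤ L ^ p := Real.rpow_nonneg hL p
    nlinarith
  have h2p : (0:ℝ) ≤ 2 ^ p := Real.rpow_nonneg (by norm_num) p
  have hap : (0:ℝ) ≤ a ^ p := Real.rpow_nonneg (by positivity) p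
  have ham : (0:ℝ) ≤ a ^ (⌈p⌉₊ : ℕ) := by positivity
  calc (a * M + L) ^ p ≤ a ^ p * (M + L) ^ p := by rw [← h3]; exact h2
    _ ≤ a ^ (⌈p⌉₊ : ℕ) * (M + L) ^ p := by
        have : (0:ℝ) ≤ (M + L) ^ p := Real.rpow_nonneg (by positivity) p
        nlinarith
    _ ≤ a ^ (⌈p⌉₊ : ℕ) * (2 ^ p * (M ^ p + L ^ p)) := by
        apply mul_le_mul_of_nonneg_left h5 ham
    _ ≤ a ^ (⌈p⌉₊ : ℕ) * (2 ^ p * (max 1 (M ^ p) * (1 + L ^ p))) := by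
        apply mul_le_mul_of_nonneg_left (mul_le_mul_of_nonneg_left h6 h2p) ham
    _ = a ^ (⌈p⌉₊) * (2 ^ p * max 1 (M ^ p) * (1 + L ^ p)) := by ring


/-- If `S ⊆ ℝ^n` is porous with porosity constant `κ ∈ (0,1]` and `1 ≤ p < ∞`, then
for every `x ∈ S` and `0 < r ≤ 1`,
`∫_{B(x,r)} |log(1/dist(y,S))|^p dy ≤ c r^n (1 + |log(1/r)|^p)` with `c = c(n,p,κ)`. -/
theorem porous_log_integral_bound (n : ℕ) (hn : 0 < n) (p κ : ℝ) (hp : 1 ≤ p)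
    (hκ : κ ∈ Set.Ioc (0:ℝ) 1) (S : Set (EuclideanSpace ℝ (Fin n)))
    (hpor : ∀ x : EuclideanSpace ℝ (Fin n), ∀ r : ℝ, 0 < r → r ≤ 1 →
      ∃ y ∈ ball x r, ball y (κ * r) ∩ S = ∅) :
    ∃ c : ℝ, 0 < c ∧ ∀ x ∈ S, ∀ r : ℝ, 0 < r → r ≤ 1 →
      ∫⁻ y in ball x r, ENNReal.ofReal (|Real.log (1 / infDist y S)| ^ p)
        ≤ ENNReal.ofReal (c * r ^ (n : ℝ) * (1 + |Real.log (1 / r)| ^ p)) := by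
  classical
  obtain ⟨hκ0, hκ1⟩ := hκ
  have hp0 : 0 < p := by linarith
  set θ : ℝ := 1 / (1 + (κ / 20) ^ n) with hθ
  have hc20 : (0:ℝ) < (κ / 20) ^ n := by positivity
  have hθ0 : 0 < θ := by rw [hθ]; positivity
  have hθ1 : θ < 1 := by
    rw [hθ, div_lt_one (by linarith)]
    linarith
  set m : ℕ := ⌈p⌉₊ with hm
  set M : ℝ := Real.log (8 / κ) with hM
  have hM0 : 0 ≤ M := Real.log_nonneg (by rw [le_div_iff₀ hκ0]; linarith)
  -- summability
  have hsum0 : Summable fun k : ℕ => (k:ℝ) ^ m * θ ^ k :=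
    summable_pow_mul_geometric_of_norm_lt_one m
      (by rw [Real.norm_eq_abs, abs_of_pos hθ0]; exact hθ1)
  have hsum1 : Summable fun k : ℕ => ((k:ℝ) + 1) ^ m * θ ^ k := by
    have h2 := (summable_nat_add_iff (f := fun k : ℕ => (k:ℝ) ^ m * θ ^ k) 1).2 hsum0
    refine ((h2.mul_left θ⁻¹).congr fun k => ?_)
    push_cast
    rw [pow_succ]
    field_simp
  set K : ℝ := ∑' k : ℕ, ((k:ℝ) + 1) ^ m * θ ^ k with hK
  have hK1 : (1:ℝ) ≤ K := by
    have h := Summable.le_tsum hsum1 0 (fun j _ => by positivity)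
    rw [hK]
    simpa using h
  set V : ENNReal := volume (ball (0 : EuclideanSpace ℝ (Fin n)) 1) with hV
  have hVfin : V ≠ ⊤ := measure_ball_lt_top.ne
  have hVpos : 0 < V := measure_ball_pos _ _ one_pos
  have hVt : 0 < V.toReal := ENNReal.toReal_pos hVpos.ne' hVfin
  refine ⟨K * (2 ^ p * max 1 (M ^ p)) * 3 ^ n * V.toReal, by positivity, ?_⟩
  intro x hx r hr0 hr1
  have hS : S.Nonempty := ⟨x, hx⟩
  set L : ℝ := Real.log (1 / r) with hL
  have hL0 : 0 ≤ L := Real.log_nonneg ((le_div_iff₀ hr0).2 (by linarith))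
  have habsL : |Real.log (1 / r)| = L := abs_of_nonneg hL0
  -- layers
  set f : EuclideanSpace ℝ (Fin n) → ENNReal :=
    fun y => ENNReal.ofReal (|Real.log (1 / infDist y S)| ^ p) with hf
  set A : ℕ → Set (EuclideanSpace ℝ (Fin n)) := fun k =>
    ((fun y => infDist y S) ⁻¹' Set.Ico ((κ/8) ^ (k+1) * r) ((κ/8) ^ k * r)) ∩ ball x r with hA
  set Z : Set (EuclideanSpace ℝ (Fin n)) :=
    ((fun y => infDist y S) ⁻¹' {0}) ∩ ball x r with hZ
  have hcover : ball x r ⊆ Z ∪ ⋃ k, A k := by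
    intro y hy
    rcases eq_or_lt_of_le (infDist_nonneg : 0 ≤ infDist y S) with h0 | h0
    · exact Or.inl ⟨by simp [← h0], hy⟩
    · right
      have hdr : infDist y S < r :=
        lt_of_le_of_lt (infDist_le_dist_of_mem hx) (mem_ball.1 hy)
      have hex : ∃ k : ℕ, (κ/8) ^ (k+1) * r ≤ infDist y S := by
        obtain ⟨k, hk⟩ := exists_pow_lt_of_lt_one (div_pos h0 hr0) (by linarith : κ/8 < 1)
        refine ⟨k, ?_⟩
        have hmono : (κ/8) ^ (k+1) ≤ (κ/8) ^ k :=
          pow_le_pow_of_le_one (by linarith) (by linarith) (Nat.le_succ k)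
        have hkr := (lt_div_iff₀ hr0).1 hk
        nlinarith
      refine Set.mem_iUnion.2 ⟨Nat.find hex, ⟨⟨Nat.find_spec hex, ?_⟩, hy⟩⟩
      rcases Nat.eq_zero_or_pos (Nat.find hex) with h | h
      · rw [h]; simpa using hdr
      · have hmin := Nat.find_min hex (Nat.sub_lt h Nat.one_pos)
        push_neg at hmin
        have hpred : Nat.find hex - 1 + 1 = Nat.find hex := Nat.succ_pred_eq_of_pos h
        rwa [hpred] at hmin
  -- integral over Z is zero
  have hZint : ∫⁻ y in Z, f y = 0 := by
    have hle : ∫⁻ y in Z, f y ≤ ∫⁻ _ in Z, (0:ENNReal) := by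
      apply setLIntegral_mono measurable_const
      intro y hy
      have h0 : infDist y S = 0 := hy.1
      simp only [hf, h0, one_div, inv_zero, Real.log_zero, abs_zero,
        Real.zero_rpow hp0.ne', ENNReal.ofReal_zero, le_refl]
    simpa using hle
  -- bound on each layer
  have hlayer : ∀ k : ℕ, ∫⁻ y in A k, f y ≤
      ENNReal.ofReal ((((k:ℝ)+1) * M + L) ^ p) * volume (A k) := by
    intro k
    rw [← setLIntegral_const]
    apply setLIntegral_mono measurable_const
    intro y hy
    obtain ⟨⟨hd1, hd2⟩, hyb⟩ := hy
    have hκk : (0:ℝ) < (κ/8) ^ (k+1) * r := by positivity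
    have hd0 : 0 < infDist y S := lt_of_lt_of_le hκk hd1
    have hd1' : infDist y S ≤ 1 := by
      have : (κ/8) ^ k ≤ 1 := pow_le_one₀ (by linarith) (by linarith)
      nlinarith [hd2]
    have hlog0 : 0 ≤ Real.log (1 / infDist y S) :=
      Real.log_nonneg ((le_div_iff₀ hd0).2 (by linarith))
    have hlogle : Real.log (1 / infDist y S) ≤ ((k:ℝ)+1) * M + L := by
      have hstep : Real.log (1 / infDist y S) ≤ Real.log (1 / ((κ/8) ^ (k+1) * r)) := by
        apply Real.log_le_log (by positivity)
        apply one_div_le_one_div_of_le hκk hd1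
      have heq : (1:ℝ) / ((κ/8) ^ (k+1) * r) = (8/κ) ^ (k+1) * (1 / r) := by
        rw [one_div, mul_inv, ← inv_pow, one_div]
        congr 1
        rw [inv_div]
      have hlogeq : Real.log ((8/κ) ^ (k+1) * (1 / r)) = ((k:ℝ)+1) * M + L := by
        rw [Real.log_mul (by positivity) (by positivity), Real.log_pow, hM, hL]
        push_cast
        ring
      rw [heq, hlogeq] at hstep
      exact hstep
    rw [hf]
    apply ENNReal.ofReal_le_ofReal
    rw [abs_of_nonneg hlog0]
    exact Real.rpow_le_rpow hlog0 hlogle (by linarith)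
  -- measure of each layer
  have hmeas : ∀ k : ℕ, volume (A k) ≤
      ENNReal.ofReal θ ^ k * volume (ball x (3 * r)) := by
    intro k
    refine le_trans (measure_mono ?_) (porous_decay hκ0 hκ1 hS hpor x hr0 hr1 k)
    apply Set.inter_subset_inter
    · intro y hy
      exact hy.2
    · apply ball_subset_ball
      nlinarith [pow_pos (show (0:ℝ) < κ/8 by linarith) k]
  -- combine everything
  have h3r : volume (ball x (3*r)) = ENNReal.ofReal ((3*r)^n) * V := by
    rw [hV, Measure.addHaar_ball_of_pos volume x (by linarith : (0:ℝ) < 3*r),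
      finrank_euclideanSpace_fin]
  set C1 : ℝ := 2 ^ p * max 1 (M ^ p) * (1 + L ^ p) with hC1
  have hC1nn : 0 ≤ C1 := by
    have h2p : (0:ℝ) ≤ 2 ^ p := Real.rpow_nonneg (by norm_num) p
    have hLp : (0:ℝ) ≤ L ^ p := Real.rpow_nonneg hL0 p
    have : (0:ℝ) ≤ max 1 (M ^ p) := le_trans zero_le_one (le_max_left _ _)
    positivity
  have hperk : ∀ k : ℕ,
      ENNReal.ofReal ((((k:ℝ)+1) * M + L) ^ p) *
        (ENNReal.ofReal θ ^ k * (ENNReal.ofReal ((3*r)^n) * V))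
      ≤ ENNReal.ofReal (((k:ℝ)+1) ^ m * θ ^ k) *
        (ENNReal.ofReal C1 * (ENNReal.ofReal ((3*r)^n) * V)) := by
    intro k
    have hb := rpow_poly_bound hp hM0 hL0 k
    have h1 : ENNReal.ofReal ((((k:ℝ)+1) * M + L) ^ p)
        ≤ ENNReal.ofReal (((k:ℝ)+1) ^ m * C1) := by
      apply ENNReal.ofReal_le_ofReal
      rw [hC1, hm]
      exact hb
    calc ENNReal.ofReal ((((k:ℝ)+1) * M + L) ^ p) *
          (ENNReal.ofReal θ ^ k * (ENNReal.ofReal ((3*r)^n) * V))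
        ≤ ENNReal.ofReal (((k:ℝ)+1) ^ m * C1) *
          (ENNReal.ofReal θ ^ k * (ENNReal.ofReal ((3*r)^n) * V)) := by gcongr
      _ = ENNReal.ofReal (((k:ℝ)+1) ^ m * θ ^ k) *
          (ENNReal.ofReal C1 * (ENNReal.ofReal ((3*r)^n) * V)) := by
          rw [← ENNReal.ofReal_pow hθ0.le,
            ENNReal.ofReal_mul (by positivity : (0:ℝ) ≤ ((k:ℝ)+1) ^ m),
            ENNReal.ofReal_mul (by positivity : (0:ℝ) ≤ ((k:ℝ)+1) ^ m)]
          ring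
  have htsum : ∑' k : ℕ, ENNReal.ofReal (((k:ℝ)+1) ^ m * θ ^ k) = ENNReal.ofReal K := by
    rw [hK, ENNReal.ofReal_tsum_of_nonneg (fun k => by positivity) hsum1]
  calc ∫⁻ y in ball x r, f y
      ≤ ∫⁻ y in Z ∪ ⋃ k, A k, f y := lintegral_mono_set hcover
    _ ≤ (∫⁻ y in Z, f y) + ∫⁻ y in ⋃ k, A k, f y := lintegral_union_le _ _ _
    _ = ∫⁻ y in ⋃ k, A k, f y := by rw [hZint, zero_add]
    _ ≤ ∑' k : ℕ, ∫⁻ y in A k, f y := lintegral_iUnion_le _ _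
    _ ≤ ∑' k : ℕ, ENNReal.ofReal ((((k:ℝ)+1) * M + L) ^ p) *
          (ENNReal.ofReal θ ^ k * (ENNReal.ofReal ((3*r)^n) * V)) := by
        refine ENNReal.tsum_le_tsum fun k => ?_
        refine le_trans (hlayer k) ?_
        rw [← h3r]
        exact mul_le_mul_right (hmeas k) _
    _ ≤ ∑' k : ℕ, ENNReal.ofReal (((k:ℝ)+1) ^ m * θ ^ k) *
          (ENNReal.ofReal C1 * (ENNReal.ofReal ((3*r)^n) * V)) :=
        ENNReal.tsum_le_tsum hperk
    _ = ENNReal.ofReal K * (ENNReal.ofReal C1 * (ENNReal.ofReal ((3*r)^n) * V)) := by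
        rw [ENNReal.tsum_mul_right, htsum]
    _ ≤ ENNReal.ofReal (K * (2 ^ p * max 1 (M ^ p)) * 3 ^ n * V.toReal * r ^ (n:ℝ) *
          (1 + |Real.log (1 / r)| ^ p)) := by
        rw [← ENNReal.ofReal_toReal hVfin,
          ← ENNReal.ofReal_mul (by positivity : (0:ℝ) ≤ (3*r)^n),
          ← ENNReal.ofReal_mul hC1nn,
          ← ENNReal.ofReal_mul (by linarith : (0:ℝ) ≤ K)]
        apply ENNReal.ofReal_le_ofReal
        apply le_of_eq
        rw [habsL, Real.rpow_natCast, hC1, ENNReal.toReal_ofReal hVt.le]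
        ring
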